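/- Every finite group of order strictly less than 60 is not an Oliver group (i.e., it contains an Oliver series), while the alternating group A₅ on 5 letters, of order 60, is an Oliver group; thus A₅ is the smallest finite Oliver group. -/

import Mathlib

/-- A finite group `G` *contains an Oliver series* if there are subgroups
`P ≤ H ≤ G` with `P` normal in `H` and `H` normal in `G`, such that `|P|` is a prime
power `p ^ a` (with `a ≥ 0`, so the trivial group is allowed), `|G/H|` is a prime power
`q ^ b` (with `b ≥ 0`), and `H/P` is cyclic. -/
def HasOliverSeries (G : Type*) [Group G] : Prop :=
  ∃ P H : Subgroup G, ∃ _ : P ≤ H, ∃ _ : H.Normal, ∃ hP : (P.subgroupOf H).Normal,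
    (∃ p a : ℕ, p.Prime ∧ Nat.card P = p ^ a) ∧
    (∃ q b : ℕ, q.Prime ∧ Nat.card (G ⧸ H) = q ^ b) ∧
    (letI := hP; IsCyclic (H ⧸ P.subgroupOf H))

/-- A finite group is an *Oliver group* if it contains no Oliver series. -/
def IsOliverGroup (G : Type*) [Group G] : Prop := ¬ HasOliverSeries G

namespace OliverAux

variable {G : Type*} [Group G]


theorem hos_of (P H : Subgroup G) (hPH : P ≤ H) (hHn : H.Normal)
    (hPn : P.Normal) (hPcard : ∃ p a : ℕ, p.Prime ∧ Nat.card P = p ^ a)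
    (hQ : ∃ q b : ℕ, q.Prime ∧ Nat.card (G ⧸ H) = q ^ b)
    (hcyc : letI := hPn.subgroupOf H; IsCyclic (H ⧸ P.subgroupOf H)) : HasOliverSeries G :=
  ⟨P, H, hPH, hHn, hPn.subgroupOf H, hPcard, hQ, hcyc⟩

theorem hos_of_normal (P : Subgroup G) (hPn : P.Normal)
    (hPcard : ∃ p a : ℕ, p.Prime ∧ Nat.card P = p ^ a)
    (hQ : ∃ q b : ℕ, q.Prime ∧ Nat.card (G ⧸ P) = q ^ b) : HasOliverSeries G := by
  refine hos_of P P le_rfl hPn hPn hPcard hQ ?_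
  have hs : Subsingleton (P ⧸ P.subgroupOf P) := by
    rw [Subgroup.subgroupOf_self]
    exact QuotientGroup.subsingleton_quotient_top
  exact @isCyclic_of_subsingleton _ _ hs


theorem lift_aux [Finite G] (P : Subgroup G) (hPn : P.Normal)
    (H' : Subgroup (G ⧸ P)) (hH'n : H'.Normal) :
    ∃ H : Subgroup G, ∃ _ : P ≤ H, H.Normal ∧
      Nat.card (G ⧸ H) = Nat.card ((G ⧸ P) ⧸ H') ∧
      Nonempty ((H ⧸ P.subgroupOf H) ≃* H') := by
  haveI := hPn
  set π := QuotientGroup.mk' P with hπdef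
  have hsurj : Function.Surjective π := QuotientGroup.mk'_surjective P
  have hle : P ≤ H'.comap π := by
    intro x hx
    have hx1 : π x = 1 := by
      rwa [← QuotientGroup.ker_mk' P, MonoidHom.mem_ker] at hx
    simp only [Subgroup.mem_comap, hx1]
    exact H'.one_mem
  refine ⟨H'.comap π, hle, hH'n.comap π, ?_, ?_⟩
  · have hmap : (H'.comap π).map π = H' := Subgroup.map_comap_eq_self_of_surjective hsurj H'
    haveI : ((H'.comap π).map π).Normal := by rwa [hmap]
    have e1 := QuotientGroup.quotientQuotientEquivQuotient P (H'.comap π) hle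
    have h2 := Nat.card_congr e1.toEquiv
    rw [hmap] at h2
    omega
  · set H : Subgroup G := H'.comap π with hHdef
    set ψ : H →* G ⧸ P := π.comp H.subtype with hψ
    have hker : ψ.ker = P.subgroupOf H := by
      rw [hψ, ← MonoidHom.comap_ker, QuotientGroup.ker_mk']
      rfl
    have hrange2 : ψ.range = H' := by
      rw [hψ, MonoidHom.range_comp, Subgroup.range_subtype]
      exact Subgroup.map_comap_eq_self_of_surjective hsurj H'
    haveI hkn : ψ.ker.Normal := MonoidHom.normal_ker ψ
    haveI : (P.subgroupOf H).Normal := hPn.subgroupOf H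
    have e2 := QuotientGroup.quotientKerEquivRange ψ
    exact ⟨((QuotientGroup.quotientMulEquivOfEq hker.symm).trans e2).trans
      (MulEquiv.subgroupCongr hrange2)⟩

theorem hos_lift [Finite G] (P : Subgroup G) (hPn : P.Normal)
    (hPcard : ∃ p a : ℕ, p.Prime ∧ Nat.card P = p ^ a)
    (H' : Subgroup (G ⧸ P)) (hH'n : H'.Normal) (hcyc : IsCyclic H')
    (hQ : ∃ q b : ℕ, q.Prime ∧ Nat.card ((G ⧸ P) ⧸ H') = q ^ b) :
    HasOliverSeries G := by
  obtain ⟨H, hPH, hHn, hcard, ⟨e⟩⟩ := lift_aux P hPn H' hH'n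
  obtain ⟨q, b, hq, hqc⟩ := hQ
  refine hos_of P H hPH hHn hPn hPcard ⟨q, b, hq, by rw [hcard, hqc]⟩ ?_
  exact isCyclic_of_surjective e.symm e.symm.surjective


theorem sylow_card [Finite G] {p m k : ℕ} (hp : p.Prime)
    (hG : Nat.card G = m * p ^ k) (hm : ¬ p ∣ m) (P : Sylow p G) :
    Nat.card P = p ^ k := by
  haveI : Fact p.Prime := ⟨hp⟩
  have hm0 : m ≠ 0 := by
    rintro rfl
    simp at hG
    exact Nat.card_pos.ne' hG
  rw [P.card_eq_multiplicity, hG]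
  congr 1
  rw [Nat.factorization_mul hm0 (pow_ne_zero k hp.pos.ne'), Finsupp.add_apply,
    hp.factorization_pow, Finsupp.single_eq_same,
    Nat.factorization_eq_zero_of_not_dvd hm, zero_add]

theorem sylow_index [Finite G] {p m k : ℕ} (hp : p.Prime)
    (hG : Nat.card G = m * p ^ k) (hm : ¬ p ∣ m) (P : Sylow p G) :
    (P : Subgroup G).index = m := by
  have h1 := Subgroup.card_mul_index (P : Subgroup G)
  rw [sylow_card hp hG hm P, hG, mul_comm m] at h1
  exact Nat.eq_of_mul_eq_mul_left (pow_pos hp.pos k) h1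

theorem sylow_facts [Finite G] {p m k : ℕ} (hp : p.Prime)
    (hG : Nat.card G = m * p ^ k) (hm : ¬ p ∣ m) :
    Nat.card (Sylow p G) ∣ m ∧ Nat.card (Sylow p G) % p = 1 ∧
    (Nat.card (Sylow p G) = 1 →
      ∃ P : Subgroup G, P.Normal ∧ Nat.card P = p ^ k ∧ Nat.card (G ⧸ P) = m) := by
  haveI : Fact p.Prime := ⟨hp⟩
  obtain ⟨P⟩ : Nonempty (Sylow p G) := inferInstance
  refine ⟨(P.card_dvd_index).trans (sylow_index hp hG hm P ▸ dvd_rfl), ?_, ?_⟩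
  · have h2 := card_sylow_modEq_one p G
    have : Nat.card (Sylow p G) % p = 1 % p := h2
    rwa [Nat.mod_eq_of_lt hp.one_lt] at this
  · intro h1
    haveI : Subsingleton (Sylow p G) := by
      have := Nat.card_eq_one_iff_unique.mp h1
      exact this.1
    have hnorm : (P : Subgroup G).Normal := by
      rw [← Subgroup.normalizer_eq_top_iff, eq_top_iff]
      intro g _
      show g ∈ Subgroup.normalizer (P : Set G)
      rw [← Sylow.stabilizer_eq_normalizer]
      exact Subsingleton.elim (g • P) P
    refine ⟨P, hnorm, sylow_card hp hG hm P, ?_⟩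
    rw [← Subgroup.index_eq_card]
    exact sylow_index hp hG hm P

theorem burnside [Finite G] {p m k : ℕ} (hp : p.Prime)
    (hG : Nat.card G = m * p ^ k) (hm : ¬ p ∣ m) (hk1 : 1 ≤ k) (hk2 : k ≤ 2)
    (hc : Nat.card (Sylow p G) = m) :
    ∃ K : Subgroup G, K.Normal ∧ Nat.card K = m ∧ Nat.card (G ⧸ K) = p ^ k := by
  haveI : Fact p.Prime := ⟨hp⟩
  obtain ⟨P⟩ : Nonempty (Sylow p G) := inferInstance
  have hm0 : 0 < m := by
    have := Nat.card_pos (α := G)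
    rw [hG] at this
    exact Nat.pos_of_ne_zero (fun h => by simp [h] at this)
  have hPcard : Nat.card P = p ^ k := sylow_card hp hG hm P
  have hNi : (Subgroup.normalizer (P : Set G)).index = m := by
    rw [← P.card_eq_index_normalizer, hc]
  have hNcard : Nat.card (Subgroup.normalizer (P : Set G)) = p ^ k := by
    have h1 := Subgroup.card_mul_index (Subgroup.normalizer (P : Set G))
    rw [hNi, hG] at h1
    exact Nat.eq_of_mul_eq_mul_right hm0 (h1.trans (mul_comm m (p^k)))
  have hNP : (P : Subgroup G) = (Subgroup.normalizer (P : Set G)) :=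
    Subgroup.eq_of_le_of_card_ge Subgroup.le_normalizer (by rw [hNcard, hPcard])
  have hcomm : ∀ a b : (P : Subgroup G), a * b = b * a := by
    rcases (by omega : k = 1 ∨ k = 2) with h | h
    · have : Nat.card (P : Subgroup G) = p := by rw [hPcard, h, pow_one]
      haveI : IsCyclic (P : Subgroup G) := isCyclic_of_prime_card this
      letI := IsCyclic.commGroup (α := (P : Subgroup G))
      exact fun a b => mul_comm a b
    · exact IsPGroup.commutative_of_card_eq_prime_sq (by rw [hPcard, h])
  have hle : (Subgroup.normalizer (P : Set G)) ≤ Subgroup.centralizer (P : Set G) := by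
    intro x hx
    rw [Subgroup.mem_centralizer_iff]
    intro y hy
    have hxP : x ∈ (P : Subgroup G) := hNP ▸ hx
    have := hcomm ⟨y, hy⟩ ⟨x, hxP⟩
    exact congrArg Subtype.val this
  have hcompl := MonoidHom.ker_transferSylow_isComplement' P hle
  have hKcard : Nat.card (MonoidHom.transferSylow P hle).ker = m := by
    have h1 := hcompl.card_mul
    rw [hPcard, hG] at h1
    exact Nat.eq_of_mul_eq_mul_right (pow_pos hp.pos k) h1
  refine ⟨(MonoidHom.transferSylow P hle).ker, MonoidHom.normal_ker _, hKcard, ?_⟩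
  · have h2 := Subgroup.card_mul_index (MonoidHom.transferSylow P hle).ker
    rw [hKcard, hG, Subgroup.index_eq_card] at h2
    exact Nat.eq_of_mul_eq_mul_left hm0 h2


theorem r4 [Finite G] {k : ℕ} (hG : Nat.card G = 3 * 2 ^ k)
    (hc : Nat.card (Sylow 2 G) = 3) :
    ∃ K : Subgroup G, K.Normal ∧ (∃ j, Nat.card K = 2 ^ j) ∧
      (Nat.card (G ⧸ K) = 3 ∨ Nat.card (G ⧸ K) = 6) := by
  haveI : Fact (Nat.Prime 2) := ⟨Nat.prime_two⟩
  obtain ⟨P⟩ : Nonempty (Sylow 2 G) := inferInstance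
  set φ := MulAction.toPermHom G (Sylow 2 G) with hφ
  have hKle : φ.ker ≤ (Subgroup.normalizer (P : Set G)) := by
    intro g hg
    rw [← Sylow.stabilizer_eq_normalizer, MulAction.mem_stabilizer_iff]
    have h1 : φ g = 1 := hg
    have : φ g P = g • P := rfl
    rw [h1] at this
    exact this.symm
  have hNi : (Subgroup.normalizer (P : Set G)).index = 3 := by
    rw [← P.card_eq_index_normalizer, hc]
  have hNcard : Nat.card (Subgroup.normalizer (P : Set G)) = 2 ^ k := by
    have h1 := Subgroup.card_mul_index (Subgroup.normalizer (P : Set G))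
    rw [hNi, hG] at h1
    rw [mul_comm] at h1
    exact Nat.eq_of_mul_eq_mul_left (by norm_num) h1
  have hKdvd : Nat.card φ.ker ∣ 2 ^ k := hNcard ▸ Subgroup.card_dvd_of_le hKle
  obtain ⟨j, hjk, hKcard⟩ := (Nat.dvd_prime_pow Nat.prime_two).mp hKdvd
  have hQdvd : Nat.card (G ⧸ φ.ker) ∣ 6 := by
    have e := QuotientGroup.quotientKerEquivRange φ
    have h1 : Nat.card (G ⧸ φ.ker) = Nat.card φ.range := Nat.card_congr e.toEquiv
    have h2 : Nat.card φ.range ∣ Nat.card (Equiv.Perm (Sylow 2 G)) :=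
      Subgroup.card_subgroup_dvd_card _
    have h3 : Nat.card (Equiv.Perm (Sylow 2 G)) = 6 := by
      letI : DecidableEq (Sylow 2 G) := Classical.decEq _
      letI : Fintype (Sylow 2 G) := Fintype.ofFinite _
      rw [Nat.card_eq_fintype_card, Fintype.card_perm, ← Nat.card_eq_fintype_card, hc]
      rfl
    rw [h1, ← h3]
    exact h2
  have hprod : Nat.card φ.ker * Nat.card (G ⧸ φ.ker) = 3 * 2 ^ k := by
    rw [← hG, ← Subgroup.index_eq_card]
    exact Subgroup.card_mul_index _
  have h3dvd : 3 ∣ Nat.card (G ⧸ φ.ker) := by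
    have h1 : (3 : ℕ) ∣ Nat.card φ.ker * Nat.card (G ⧸ φ.ker) := by
      rw [hprod]; exact Dvd.intro _ rfl
    rcases (Nat.prime_three.dvd_mul.mp h1) with h | h
    · exfalso
      rw [hKcard] at h
      have := Nat.Prime.dvd_of_dvd_pow (m := 2) Nat.prime_three h
      norm_num at this
    · exact h
  refine ⟨φ.ker, MonoidHom.normal_ker φ, ⟨j, hKcard⟩, ?_⟩
  have hpos : 0 < Nat.card (G ⧸ φ.ker) := Nat.card_pos
  have hle6 : Nat.card (G ⧸ φ.ker) ≤ 6 := Nat.le_of_dvd (by norm_num) hQdvd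
  interval_cases h : (Nat.card (G ⧸ φ.ker)) <;> omega


/-- prime power order groups -/
theorem hos_pp [Finite G] (p a : ℕ) (hp : p.Prime) (h : Nat.card G = p ^ a) :
    HasOliverSeries G := by
  refine hos_of_normal ⊥ (by infer_instance) ⟨2, 0, Nat.prime_two, by
    rw [Subgroup.card_bot, pow_zero]⟩ ⟨p, a, hp, ?_⟩
  rw [Nat.card_congr (QuotientGroup.quotientBot (G := G)).toEquiv, h]

/-- P normal of prime-power order, quotient of order q*r with q < r primes. -/
theorem hos_P_pq [Finite G] (P : Subgroup G) (hPn : P.Normal)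
    (hPcard : ∃ p a : ℕ, p.Prime ∧ Nat.card P = p ^ a)
    (q r : ℕ) (hq : q.Prime) (hr : r.Prime)
    (hQcard : Nat.card (G ⧸ P) = q * r) (hrq : ¬ r ∣ q)
    (hforce : ∀ d, d ∣ q → d % r = 1 → d = 1) :
    HasOliverSeries G := by
  haveI : Fact r.Prime := ⟨hr⟩
  obtain ⟨hdvd, hmod, hnorm⟩ := sylow_facts (G := G ⧸ P) hr
    (by rw [hQcard, pow_one]) hrq
  obtain ⟨H', hH'n, hH'c, hH'q⟩ := hnorm (hforce _ hdvd hmod)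
  rw [pow_one] at hH'c
  exact hos_lift P hPn hPcard H' hH'n (isCyclic_of_prime_card hH'c)
    ⟨q, 1, hq, by rw [pow_one]; exact hH'q⟩

/-- forced normal Sylow with prime-power quotient -/
theorem hos_ns_pp [Finite G] (p q k b : ℕ) (hp : p.Prime) (hq : q.Prime)
    (hG : Nat.card G = q ^ b * p ^ k) (hm : ¬ p ∣ q ^ b)
    (hforce : ∀ d, d ∣ q ^ b → d % p = 1 → d = 1) :
    HasOliverSeries G := by
  obtain ⟨hdvd, hmod, hnorm⟩ := sylow_facts hp hG hm
  obtain ⟨P, hPn, hPc, hPq⟩ := hnorm (hforce _ hdvd hmod)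
  exact hos_of_normal P hPn ⟨p, k, hp, hPc⟩ ⟨q, b, hq, hPq⟩

/-- forced normal Sylow with q*r quotient -/
theorem hos_ns_pq [Finite G] (p k q r : ℕ) (hp : p.Prime) (hq : q.Prime) (hr : r.Prime)
    (hG : Nat.card G = (q * r) * p ^ k) (hm : ¬ p ∣ q * r)
    (hforce : ∀ d, d ∣ q * r → d % p = 1 → d = 1)
    (hrq : ¬ r ∣ q) (hforce2 : ∀ d, d ∣ q → d % r = 1 → d = 1) :
    HasOliverSeries G := by
  obtain ⟨hdvd, hmod, hnorm⟩ := sylow_facts hp hG hm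
  obtain ⟨P, hPn, hPc, hPq⟩ := hnorm (hforce _ hdvd hmod)
  exact hos_P_pq P hPn ⟨p, k, hp, hPc⟩ q r hq hr hPq hrq hforce2

theorem forced_helper (n p : ℕ) (hn : 0 < n)
    (h : ∀ d, d < n + 1 → d ∣ n → d % p = 1 → d = 1) :
    ∀ d, d ∣ n → d % p = 1 → d = 1 :=
  fun d hd => h d (Nat.lt_succ_of_le (Nat.le_of_dvd hn hd)) hd

theorem hos_12_36 [Finite G] (k : ℕ) (hk1 : 1 ≤ k) (hk2 : k ≤ 2)
    (hG : Nat.card G = 4 * 3 ^ k) : HasOliverSeries G := by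
  obtain ⟨hdvd, hmod, hnorm⟩ := sylow_facts Nat.prime_three hG (by norm_num)
  obtain ⟨s, hs⟩ : ∃ s, Nat.card (Sylow 3 G) = s := ⟨_, rfl⟩
  rw [hs] at hdvd hmod
  have hble := Nat.le_of_dvd (by norm_num) hdvd
  have : s = 1 ∨ s = 4 := by interval_cases s <;> omega
  rcases this with h | h
  · obtain ⟨P, hPn, hc, hq⟩ := hnorm (hs.trans h)
    exact hos_of_normal P hPn ⟨3, k, Nat.prime_three, hc⟩ ⟨2, 2, Nat.prime_two, by rw [hq]; norm_num⟩
  · obtain ⟨K, hKn, hKc, hKq⟩ := burnside Nat.prime_three hG (by norm_num) hk1 hk2 (hs.trans h)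
    exact hos_of_normal K hKn ⟨2, 2, Nat.prime_two, by rw [hKc]; norm_num⟩ ⟨3, k, Nat.prime_three, hKq⟩

theorem hos_56 [Finite G] (hG : Nat.card G = 8 * 7 ^ 1) : HasOliverSeries G := by
  obtain ⟨hdvd, hmod, hnorm⟩ := sylow_facts (by norm_num : Nat.Prime 7) hG (by norm_num)
  obtain ⟨s, hs⟩ : ∃ s, Nat.card (Sylow 7 G) = s := ⟨_, rfl⟩
  rw [hs] at hdvd hmod
  have hble := Nat.le_of_dvd (by norm_num) hdvd
  have : s = 1 ∨ s = 8 := by interval_cases s <;> omega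
  rcases this with h | h
  · obtain ⟨P, hPn, hc, hq⟩ := hnorm (hs.trans h)
    exact hos_of_normal P hPn ⟨7, 1, by norm_num, hc⟩ ⟨2, 3, Nat.prime_two, by rw [hq]; norm_num⟩
  · obtain ⟨K, hKn, hKc, hKq⟩ := burnside (by norm_num : Nat.Prime 7) hG (by norm_num)
      le_rfl (by norm_num) (hs.trans h)
    exact hos_of_normal K hKn ⟨2, 3, Nat.prime_two, by rw [hKc]; norm_num⟩ ⟨7, 1, by norm_num, hKq⟩

theorem hos_24_48 [Finite G] (k : ℕ) (hG : Nat.card G = 3 * 2 ^ k) : HasOliverSeries G := by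
  obtain ⟨hdvd, hmod, hnorm⟩ := sylow_facts Nat.prime_two hG (by norm_num)
  obtain ⟨s, hs⟩ : ∃ s, Nat.card (Sylow 2 G) = s := ⟨_, rfl⟩
  rw [hs] at hdvd hmod
  have hble := Nat.le_of_dvd (by norm_num) hdvd
  have : s = 1 ∨ s = 3 := by interval_cases s <;> omega
  rcases this with h | h
  · obtain ⟨P, hPn, hc, hq⟩ := hnorm (hs.trans h)
    exact hos_of_normal P hPn ⟨2, k, Nat.prime_two, hc⟩ ⟨3, 1, Nat.prime_three, by rw [hq, pow_one]⟩
  · obtain ⟨K, hKn, ⟨j, hKc⟩, hKq | hKq⟩ := r4 hG (hs.trans h)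
    · exact hos_of_normal K hKn ⟨2, j, Nat.prime_two, hKc⟩ ⟨3, 1, Nat.prime_three, by rw [hKq, pow_one]⟩
    · exact hos_P_pq K hKn ⟨2, j, Nat.prime_two, hKc⟩ 2 3 Nat.prime_two Nat.prime_three
        (by rw [hKq]) (by norm_num) (forced_helper 2 3 (by norm_num) (by decide))



theorem hos_30 [Finite G] (hG30 : Nat.card G = 30) : HasOliverSeries G := by
  have hG5 : Nat.card G = 6 * 5 ^ 1 := by rw [hG30]; norm_num
  have hG3 : Nat.card G = 10 * 3 ^ 1 := by rw [hG30]; norm_num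
  have hp5 : Nat.Prime 5 := by norm_num
  obtain ⟨hdvd5, hmod5, hnorm5⟩ := sylow_facts hp5 hG5 (by norm_num)
  obtain ⟨s, hs⟩ : ∃ s, Nat.card (Sylow 5 G) = s := ⟨_, rfl⟩
  rw [hs] at hdvd5 hmod5
  have hble5 := Nat.le_of_dvd (by norm_num) hdvd5
  have h5 : s = 1 ∨ s = 6 := by interval_cases s <;> omega
  rcases h5 with h | h
  · obtain ⟨P, hPn, hc, hq⟩ := hnorm5 (hs.trans h)
    exact hos_P_pq P hPn ⟨5, 1, hp5, hc⟩ 2 3 Nat.prime_two Nat.prime_three (by rw [hq])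
      (by norm_num) (forced_helper 2 3 (by norm_num) (by decide))
  obtain ⟨K6, hK6n, hK6c, hK6q⟩ := burnside hp5 hG5 (by norm_num) le_rfl (by norm_num) (hs.trans h)
  obtain ⟨hdvd3, hmod3, hnorm3⟩ := sylow_facts Nat.prime_three hG3 (by norm_num)
  obtain ⟨t, ht⟩ : ∃ t, Nat.card (Sylow 3 G) = t := ⟨_, rfl⟩
  rw [ht] at hdvd3 hmod3
  have hble3 := Nat.le_of_dvd (by norm_num) hdvd3
  have h3 : t = 1 ∨ t = 10 := by interval_cases t <;> omega
  rcases h3 with h' | h'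
  · obtain ⟨P, hPn, hc, hq⟩ := hnorm3 (ht.trans h')
    exact hos_P_pq P hPn ⟨3, 1, Nat.prime_three, hc⟩ 2 5 Nat.prime_two hp5 (by rw [hq])
      (by norm_num) (forced_helper 2 5 (by norm_num) (by decide))
  obtain ⟨K10, hK10n, hK10c, hK10q⟩ := burnside Nat.prime_three hG3 (by norm_num) le_rfl
    (by norm_num) (ht.trans h')
  -- intersection argument
  set N : Subgroup G := K6 ⊓ K10 with hNdef
  have hNn : N.Normal := by
    constructor
    intro n hn g
    rw [hNdef, Subgroup.mem_inf] at hn ⊢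
    exact ⟨hK6n.conj_mem n hn.1 g, hK10n.conj_mem n hn.2 g⟩
  have hN6 : Nat.card N ∣ 6 := hK6c ▸ Subgroup.card_dvd_of_le inf_le_left
  have hN10 : Nat.card N ∣ 10 := hK10c ▸ Subgroup.card_dvd_of_le inf_le_right
  have hN2 : Nat.card N ∣ 2 := by
    have := Nat.dvd_gcd hN6 hN10
    norm_num at this
    exact this
  set f := (QuotientGroup.mk' K6).prod (QuotientGroup.mk' K10) with hfdef
  have hker : f.ker = N := by
    rw [hfdef, MonoidHom.ker_prod, QuotientGroup.ker_mk', QuotientGroup.ker_mk']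
  have hQ15 : Nat.card (G ⧸ N) ∣ 15 := by
    have e := QuotientGroup.quotientKerEquivRange f
    have h1 : Nat.card (G ⧸ N) = Nat.card f.range := by
      rw [← hker]
      exact Nat.card_congr e.toEquiv
    have h2 : Nat.card f.range ∣ Nat.card ((G ⧸ K6) × (G ⧸ K10)) :=
      Subgroup.card_subgroup_dvd_card _
    rw [Nat.card_prod, hK6q, hK10q] at h2
    rw [h1]
    have h3 : (5 ^ 1 * 3 ^ 1 : ℕ) = 15 := by norm_num
    rwa [h3] at h2
  have hprod : Nat.card N * Nat.card (G ⧸ N) = 30 := by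
    rw [← hG30, ← Subgroup.index_eq_card]
    exact Subgroup.card_mul_index N
  have hN2' : Nat.card N = 1 ∨ Nat.card N = 2 := (Nat.dvd_prime Nat.prime_two).mp hN2
  rcases hN2' with hN | hN
  · exfalso
    rw [hN, one_mul] at hprod
    rw [hprod] at hQ15
    omega
  · have hQc : Nat.card (G ⧸ N) = 15 := by rw [hN] at hprod; omega
    exact hos_P_pq N hNn ⟨2, 1, Nat.prime_two, by rw [hN]; norm_num⟩ 3 5 Nat.prime_three hp5
      (by rw [hQc]) (by norm_num) (forced_helper 3 5 (by norm_num) (by decide))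

theorem small_hos (G : Type*) [Group G] [Finite G] (h : Nat.card G < 60) :
    HasOliverSeries G := by
  obtain ⟨n, hn⟩ : ∃ n, Nat.card G = n := ⟨_, rfl⟩
  have hpos : 0 < n := hn ▸ Nat.card_pos
  have hlt : n < 60 := hn ▸ h
  interval_cases n
  · exact hos_pp 2 0 (by norm_num) (by rw [hn]; norm_num)
  · exact hos_pp 2 1 (by norm_num) (by rw [hn]; norm_num)
  · exact hos_pp 3 1 (by norm_num) (by rw [hn]; norm_num)
  · exact hos_pp 2 2 (by norm_num) (by rw [hn]; norm_num)
  · exact hos_pp 5 1 (by norm_num) (by rw [hn]; norm_num)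
  · exact hos_ns_pp 3 2 1 1 (by norm_num) (by norm_num) (by rw [hn]; norm_num) (by norm_num) (forced_helper _ _ (by norm_num) (by decide))
  · exact hos_pp 7 1 (by norm_num) (by rw [hn]; norm_num)
  · exact hos_pp 2 3 (by norm_num) (by rw [hn]; norm_num)
  · exact hos_pp 3 2 (by norm_num) (by rw [hn]; norm_num)
  · exact hos_ns_pp 5 2 1 1 (by norm_num) (by norm_num) (by rw [hn]; norm_num) (by norm_num) (forced_helper _ _ (by norm_num) (by decide))
  · exact hos_pp 11 1 (by norm_num) (by rw [hn]; norm_num)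
  · exact hos_12_36 1 le_rfl (by norm_num) (by rw [hn]; norm_num)
  · exact hos_pp 13 1 (by norm_num) (by rw [hn]; norm_num)
  · exact hos_ns_pp 7 2 1 1 (by norm_num) (by norm_num) (by rw [hn]; norm_num) (by norm_num) (forced_helper _ _ (by norm_num) (by decide))
  · exact hos_ns_pp 5 3 1 1 (by norm_num) (by norm_num) (by rw [hn]; norm_num) (by norm_num) (forced_helper _ _ (by norm_num) (by decide))
  · exact hos_pp 2 4 (by norm_num) (by rw [hn]; norm_num)
  · exact hos_pp 17 1 (by norm_num) (by rw [hn]; norm_num)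
  · exact hos_ns_pp 3 2 2 1 (by norm_num) (by norm_num) (by rw [hn]; norm_num) (by norm_num) (forced_helper _ _ (by norm_num) (by decide))
  · exact hos_pp 19 1 (by norm_num) (by rw [hn]; norm_num)
  · exact hos_ns_pp 5 2 1 2 (by norm_num) (by norm_num) (by rw [hn]; norm_num) (by norm_num) (forced_helper _ _ (by norm_num) (by decide))
  · exact hos_ns_pp 7 3 1 1 (by norm_num) (by norm_num) (by rw [hn]; norm_num) (by norm_num) (forced_helper _ _ (by norm_num) (by decide))
  · exact hos_ns_pp 11 2 1 1 (by norm_num) (by norm_num) (by rw [hn]; norm_num) (by norm_num) (forced_helper _ _ (by norm_num) (by decide))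
  · exact hos_pp 23 1 (by norm_num) (by rw [hn]; norm_num)
  · exact hos_24_48 3 (by rw [hn]; norm_num)
  · exact hos_pp 5 2 (by norm_num) (by rw [hn]; norm_num)
  · exact hos_ns_pp 13 2 1 1 (by norm_num) (by norm_num) (by rw [hn]; norm_num) (by norm_num) (forced_helper _ _ (by norm_num) (by decide))
  · exact hos_pp 3 3 (by norm_num) (by rw [hn]; norm_num)
  · exact hos_ns_pp 7 2 1 2 (by norm_num) (by norm_num) (by rw [hn]; norm_num) (by norm_num) (forced_helper _ _ (by norm_num) (by decide))
  · exact hos_pp 29 1 (by norm_num) (by rw [hn]; norm_num)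
  · exact hos_30 hn
  · exact hos_pp 31 1 (by norm_num) (by rw [hn]; norm_num)
  · exact hos_pp 2 5 (by norm_num) (by rw [hn]; norm_num)
  · exact hos_ns_pp 11 3 1 1 (by norm_num) (by norm_num) (by rw [hn]; norm_num) (by norm_num) (forced_helper _ _ (by norm_num) (by decide))
  · exact hos_ns_pp 17 2 1 1 (by norm_num) (by norm_num) (by rw [hn]; norm_num) (by norm_num) (forced_helper _ _ (by norm_num) (by decide))
  · exact hos_ns_pp 7 5 1 1 (by norm_num) (by norm_num) (by rw [hn]; norm_num) (by norm_num) (forced_helper _ _ (by norm_num) (by decide))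
  · exact hos_12_36 2 (by norm_num) le_rfl (by rw [hn]; norm_num)
  · exact hos_pp 37 1 (by norm_num) (by rw [hn]; norm_num)
  · exact hos_ns_pp 19 2 1 1 (by norm_num) (by norm_num) (by rw [hn]; norm_num) (by norm_num) (forced_helper _ _ (by norm_num) (by decide))
  · exact hos_ns_pp 13 3 1 1 (by norm_num) (by norm_num) (by rw [hn]; norm_num) (by norm_num) (forced_helper _ _ (by norm_num) (by decide))
  · exact hos_ns_pp 5 2 1 3 (by norm_num) (by norm_num) (by rw [hn]; norm_num) (by norm_num) (forced_helper _ _ (by norm_num) (by decide))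
  · exact hos_pp 41 1 (by norm_num) (by rw [hn]; norm_num)
  · exact hos_ns_pq 7 1 2 3 (by norm_num) (by norm_num) (by norm_num) (by rw [hn]; norm_num) (by norm_num) (forced_helper _ _ (by norm_num) (by decide)) (by norm_num) (forced_helper _ _ (by norm_num) (by decide))
  · exact hos_pp 43 1 (by norm_num) (by rw [hn]; norm_num)
  · exact hos_ns_pp 11 2 1 2 (by norm_num) (by norm_num) (by rw [hn]; norm_num) (by norm_num) (forced_helper _ _ (by norm_num) (by decide))
  · exact hos_ns_pp 5 3 1 2 (by norm_num) (by norm_num) (by rw [hn]; norm_num) (by norm_num) (forced_helper _ _ (by norm_num) (by decide))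
  · exact hos_ns_pp 23 2 1 1 (by norm_num) (by norm_num) (by rw [hn]; norm_num) (by norm_num) (forced_helper _ _ (by norm_num) (by decide))
  · exact hos_pp 47 1 (by norm_num) (by rw [hn]; norm_num)
  · exact hos_24_48 4 (by rw [hn]; norm_num)
  · exact hos_pp 7 2 (by norm_num) (by rw [hn]; norm_num)
  · exact hos_ns_pp 5 2 2 1 (by norm_num) (by norm_num) (by rw [hn]; norm_num) (by norm_num) (forced_helper _ _ (by norm_num) (by decide))
  · exact hos_ns_pp 17 3 1 1 (by norm_num) (by norm_num) (by rw [hn]; norm_num) (by norm_num) (forced_helper _ _ (by norm_num) (by decide))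
  · exact hos_ns_pp 13 2 1 2 (by norm_num) (by norm_num) (by rw [hn]; norm_num) (by norm_num) (forced_helper _ _ (by norm_num) (by decide))
  · exact hos_pp 53 1 (by norm_num) (by rw [hn]; norm_num)
  · exact hos_ns_pp 3 2 3 1 (by norm_num) (by norm_num) (by rw [hn]; norm_num) (by norm_num) (forced_helper _ _ (by norm_num) (by decide))
  · exact hos_ns_pp 11 5 1 1 (by norm_num) (by norm_num) (by rw [hn]; norm_num) (by norm_num) (forced_helper _ _ (by norm_num) (by decide))
  · exact hos_56 (by rw [hn]; norm_num)
  · exact hos_ns_pp 19 3 1 1 (by norm_num) (by norm_num) (by rw [hn]; norm_num) (by norm_num) (forced_helper _ _ (by norm_num) (by decide))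
  · exact hos_ns_pp 29 2 1 1 (by norm_num) (by norm_num) (by rw [hn]; norm_num) (by norm_num) (forced_helper _ _ (by norm_num) (by decide))
  · exact hos_pp 59 1 (by norm_num) (by rw [hn]; norm_num)

theorem card_A5 : Nat.card (alternatingGroup (Fin 5)) = 60 := by
  have h := two_mul_card_alternatingGroup (α := Fin 5)
  rw [Fintype.card_perm, Fintype.card_fin] at h
  norm_num [Nat.factorial] at h
  have h2 : 2 * Fintype.card (alternatingGroup (Fin 5)) = 120 := h
  rw [Nat.card_eq_fintype_card]
  omega

theorem not_pp (r c : ℕ) (hr : r.Prime) : (60 : ℕ) ≠ r ^ c := by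
  intro he
  have h2 : (2 : ℕ) ∣ r ^ c := by rw [← he]; norm_num
  have h3 : (3 : ℕ) ∣ r ^ c := by rw [← he]; norm_num
  have h2' := (Nat.prime_dvd_prime_iff_eq Nat.prime_two hr).mp (Nat.prime_two.dvd_of_dvd_pow h2)
  have h3' := (Nat.prime_dvd_prime_iff_eq Nat.prime_three hr).mp (Nat.prime_three.dvd_of_dvd_pow h3)
  omega

theorem A5_oliver : IsOliverGroup (alternatingGroup (Fin 5)) := by
  rintro ⟨P, H, hPH, hHn, hPn, ⟨p, a, hp, hPc⟩, ⟨q, b, hq, hQc⟩, hcyc⟩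
  rcases hHn.eq_bot_or_eq_top with hH | hH
  · subst hH
    rw [Nat.card_congr (QuotientGroup.quotientBot (G := alternatingGroup (Fin 5))).toEquiv, card_A5] at hQc
    exact not_pp q b hq hQc
  · subst hH
    have hPn' : P.Normal := by
      constructor
      intro n hn g
      have := hPn.conj_mem ⟨n, Subgroup.mem_top n⟩
        (by rwa [Subgroup.mem_subgroupOf]) ⟨g, Subgroup.mem_top g⟩
      rwa [Subgroup.mem_subgroupOf] at this
    rcases hPn'.eq_bot_or_eq_top with hP | hP
    · subst hP
      haveI := hPn
      haveI hcyc' : IsCyclic ((⊤ : Subgroup (alternatingGroup (Fin 5))) ⧸ (⊥ : Subgroup (alternatingGroup (Fin 5))).subgroupOf ⊤) := hcyc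
      have hone : ∀ x : (⊤ : Subgroup (alternatingGroup (Fin 5))), x ∈ (⊥ : Subgroup (alternatingGroup (Fin 5))).subgroupOf ⊤ →
          (Subgroup.topEquiv (G := alternatingGroup (Fin 5))).toMonoidHom x = 1 := by
        intro x hx
        rw [Subgroup.mem_subgroupOf, Subgroup.mem_bot] at hx
        simpa using hx
      set f := QuotientGroup.lift ((⊥ : Subgroup (alternatingGroup (Fin 5))).subgroupOf ⊤)
        (Subgroup.topEquiv (G := alternatingGroup (Fin 5))).toMonoidHom hone with hfdef
      have hfs : Function.Surjective f := by
        intro y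
        exact ⟨QuotientGroup.mk ⟨y, Subgroup.mem_top y⟩, by simp [hfdef]⟩
      haveI hcA : IsCyclic (alternatingGroup (Fin 5)) := isCyclic_of_surjective f hfs
      have hcomm : ∀ y z : alternatingGroup (Fin 5), y * z = z * y := by
        letI := IsCyclic.commGroup (α := alternatingGroup (Fin 5))
        exact fun y z => mul_comm y z
      haveI : Fact (Nat.Prime 2) := ⟨Nat.prime_two⟩
      obtain ⟨x, hx⟩ := exists_prime_orderOf_dvd_card 2 (G := alternatingGroup (Fin 5)) (by
        rw [← Nat.card_eq_fintype_card, card_A5]; norm_num)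
      have hZn : (Subgroup.zpowers x).Normal := by
        constructor
        intro n hn g
        have hcg : g * n * g⁻¹ = n := by rw [hcomm g n]; group
        rw [hcg]; exact hn
      have hcard := Nat.card_zpowers x
      rcases hZn.eq_bot_or_eq_top with hZ | hZ
      · rw [hZ, Subgroup.card_bot, hx] at hcard; omega
      · rw [hZ, Subgroup.card_top, card_A5, hx] at hcard; omega
    · subst hP
      rw [Subgroup.card_top, card_A5] at hPc
      exact not_pp p a hp hPc

end OliverAux

/-- Every finite group of order strictly less than `60` contains an Oliver series
(hence is not an Oliver group), while the alternating group `A₅` on `5` letters, of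
order `60`, is an Oliver group; thus `A₅` is the smallest finite Oliver group. -/
theorem alternatingGroup_five_smallest_oliver :
    (∀ (G : Type) [Group G] [Finite G], Nat.card G < 60 → HasOliverSeries G) ∧
    Nat.card (alternatingGroup (Fin 5)) = 60 ∧
    IsOliverGroup (alternatingGroup (Fin 5)) :=
  ⟨fun G _ _ h => OliverAux.small_hos G h, OliverAux.card_A5, OliverAux.A5_oliver⟩
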